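/- The set S₀ = { n ∈ ℕ : ∃ t ≥ 1 such that p_1, ..., p_t all divide n, none of p_1², ..., p_t² divides n, and p_{t+1} does not divide n } has a characteristic sequence that is not eventually periodic (so the unary language { a^n : n ∈ S₀ } is nonregular). -/

import Mathlib

/-- A set of naturals is eventually periodic. -/
def EventuallyPeriodic (S : Set ℕ) : Prop :=
  ∃ N d : ℕ, 1 ≤ d ∧ ∀ n : ℕ, N ≤ n → (n ∈ S ↔ n + d ∈ S)

/-- `S₀`: there is `t ≥ 1` such that the first `t` primes divide `n`, none of their
squares divides `n`, and the `(t+1)`-st prime does not divide `n`.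
Here `Nat.nth Nat.Prime i` is the `(i+1)`-st prime (`Nat.nth Nat.Prime 0 = 2`). -/
def S₀ : Set ℕ :=
  {n : ℕ | ∃ t : ℕ, 1 ≤ t ∧ (∀ i < t, Nat.nth Nat.Prime i ∣ n) ∧
    (∀ i < t, ¬ (Nat.nth Nat.Prime i) ^ 2 ∣ n) ∧ ¬ Nat.nth Nat.Prime t ∣ n}

private lemma nthp_prime (i : ℕ) : (Nat.nth Nat.Prime i).Prime := Nat.prime_nth_prime i

private lemma nthp_inj : Function.Injective (Nat.nth Nat.Prime) :=
  Nat.nth_injective Nat.infinite_setOf_prime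

private lemma periodic_iterate {S : Set ℕ} {N d : ℕ}
    (h : ∀ n : ℕ, N ≤ n → (n ∈ S ↔ n + d ∈ S)) :
    ∀ m n : ℕ, N ≤ n → (n ∈ S ↔ n + m * d ∈ S) := by
  intro m
  induction m with
  | zero => simp
  | succ m ih =>
    intro n hn
    have h1 := ih n hn
    have h2 := h (n + m * d) (le_trans hn (Nat.le_add_right _ _))
    rw [h1, h2, add_assoc, add_mul, one_mul]

theorem S₀_not_eventuallyPeriodic : ¬ EventuallyPeriodic S₀ := by
  rintro ⟨N, d, hd, hper⟩
  set p : ℕ → ℕ := Nat.nth Nat.Prime with hp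
  set t : ℕ := d + 1 with ht
  set q : ℕ := p t with hq
  have hqprime : q.Prime := nthp_prime t
  have hqpos : 0 < q := hqprime.pos
  -- q > d
  have hqd : d < q := lt_of_lt_of_le (Nat.lt_succ_self d)
    ((Nat.nth_strictMono Nat.infinite_setOf_prime).le_apply)
  have hqnd : ¬ q ∣ d := fun h => absurd (Nat.le_of_dvd hd h) (not_le.mpr hqd)
  -- primorial P
  set P : ℕ := ∏ j ∈ Finset.range t, p j with hP
  have hPpos : 0 < P := Finset.prod_pos fun j _ => (nthp_prime j).pos
  -- each p j for j < t divides P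
  have hdvdP : ∀ j < t, p j ∣ P := fun j hj =>
    Finset.dvd_prod_of_mem _ (Finset.mem_range.mpr hj)
  -- q does not divide P
  have hqP : ¬ q ∣ P := by
    intro h
    obtain ⟨j, hj, hdvd⟩ := (hqprime.prime.dvd_finset_prod_iff _).mp h
    have : q = p j := ((Nat.prime_dvd_prime_iff_eq hqprime (nthp_prime j)).mp hdvd)
    have htj : t = j := nthp_inj this
    exact absurd (Finset.mem_range.mp hj) (htj ▸ lt_irrefl j)
  -- p j ^2 does not divide P
  have hsqP : ∀ j < t, ¬ (p j) ^ 2 ∣ P := by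
    intro j hj hdvd
    have hmem : j ∈ Finset.range t := Finset.mem_range.mpr hj
    have hfac : p j * ∏ x ∈ (Finset.range t).erase j, p x = P :=
      Finset.mul_prod_erase _ _ hmem
    have hnotdvd : ¬ p j ∣ ∏ x ∈ (Finset.range t).erase j, p x := by
      intro h
      obtain ⟨i, hi, hdvd'⟩ := ((nthp_prime j).prime.dvd_finset_prod_iff _).mp h
      have : p j = p i := (Nat.prime_dvd_prime_iff_eq (nthp_prime j) (nthp_prime i)).mp hdvd'
      have hji : j = i := nthp_inj this
      exact (Finset.ne_of_mem_erase hi) hji.symm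
    apply hnotdvd
    have : p j * p j ∣ p j * ∏ x ∈ (Finset.range t).erase j, p x := by
      rw [hfac, ← pow_two]; exact hdvd
    exact (Nat.mul_dvd_mul_iff_left (nthp_prime j).pos).mp this
  -- base point n₀ = P * c, c = 1 + N * P * q
  set c : ℕ := 1 + N * P * q with hc
  set n₀ : ℕ := P * c with hn₀
  have hn₀N : N ≤ n₀ := by
    have : N * (P * q) ≤ P * c := by
      calc N * (P * q) ≤ N * P * q := le_of_eq (mul_assoc N P q).symm
        _ ≤ 1 + N * P * q := Nat.le_add_left _ _
        _ ≤ P * (1 + N * P * q) := Nat.le_mul_of_pos_left _ hPpos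
    calc N ≤ N * (P * q) := Nat.le_mul_of_pos_right _ (Nat.mul_pos hPpos hqpos)
      _ ≤ n₀ := this
  -- p j ∤ c for j < t, and q ∤ c
  have hjc : ∀ j < t, ¬ p j ∣ c := by
    intro j hj hdvd
    have h1 : p j ∣ N * P * q := Dvd.dvd.mul_right (Dvd.dvd.mul_left (hdvdP j hj) N) q
    have : p j ∣ 1 := (Nat.dvd_add_right h1).mp (by rw [hc, Nat.add_comm] at hdvd; exact hdvd)
    exact (Nat.Prime.one_lt (nthp_prime j)).ne' (Nat.dvd_one.mp this)
  have hqc : ¬ q ∣ c := by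
    intro hdvd
    have h1 : q ∣ N * P * q := Dvd.dvd.mul_left dvd_rfl _
    have : q ∣ 1 := (Nat.dvd_add_right h1).mp (by rw [hc, Nat.add_comm] at hdvd; exact hdvd)
    exact hqprime.one_lt.ne' (Nat.dvd_one.mp this)
  -- n₀ ∈ S₀
  have hn₀mem : n₀ ∈ S₀ := by
    refine ⟨t, by omega, fun i hi => (hdvdP i hi).mul_right c, ?_, ?_⟩
    · intro i hi hdvd
      have hcop : Nat.Coprime ((p i) ^ 2) c :=
        (Nat.Prime.coprime_iff_not_dvd (nthp_prime i)).mpr (hjc i hi) |>.pow_left _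
      exact hsqP i hi (hcop.dvd_of_dvd_mul_right hdvd)
    · intro hdvd
      rcases (Nat.Prime.dvd_mul hqprime).mp hdvd with h | h
      · exact hqP h
      · exact hqc h
  -- period multiple D = d * P^2
  set D : ℕ := d * P ^ 2 with hD
  have hqD : ¬ q ∣ D := by
    intro h
    rcases (Nat.Prime.dvd_mul hqprime).mp h with h | h
    · exact hqnd h
    · exact hqP (hqprime.dvd_of_dvd_pow h)
  have hcop : Nat.Coprime D (q ^ 2) :=
    (((Nat.Prime.coprime_iff_not_dvd hqprime).mpr hqD).symm).pow_right 2
  -- find k with q^2 ∣ n₀ + k * D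
  have hne : NeZero (q ^ 2) := ⟨pow_ne_zero _ hqpos.ne'⟩
  obtain ⟨k, hk⟩ : ∃ k : ℕ, q ^ 2 ∣ n₀ + k * D := by
    let u : (ZMod (q ^ 2))ˣ := ZMod.unitOfCoprime D hcop
    refine ⟨((-(n₀ : ZMod (q ^ 2))) * (↑u⁻¹ : ZMod (q ^ 2))).val, ?_⟩
    rw [← ZMod.natCast_eq_zero_iff]
    push_cast
    rw [ZMod.natCast_val, ZMod.cast_id]
    have hu : (u : ZMod (q ^ 2)) = (D : ZMod (q ^ 2)) := ZMod.coe_unitOfCoprime D hcop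
    rw [← hu, mul_assoc, Units.inv_mul, mul_one]
    ring
  -- n₀ + k * D ∉ S₀
  have hnotmem : n₀ + k * D ∉ S₀ := by
    rintro ⟨t', ht', h1, h2, h3⟩
    rcases lt_trichotomy t' t with hlt | heq | hgt
    · -- p t' divides n₀ + k D
      apply h3
      have hdn : p t' ∣ n₀ := (hdvdP t' hlt).mul_right c
      have hdD : p t' ∣ D :=
        dvd_mul_of_dvd_right ((hdvdP t' hlt).trans (dvd_pow_self P two_ne_zero)) d
      exact dvd_add hdn (hdD.mul_left k)
    · apply h3
      rw [heq]
      exact (dvd_pow_self q two_ne_zero).trans hk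
    · exact h2 t hgt hk
  -- contradiction via periodicity
  have := periodic_iterate hper (k * P ^ 2) n₀ hn₀N
  rw [hn₀] at this
  have heqn : n₀ + k * P ^ 2 * d = n₀ + k * D := by rw [hD]; ring
  exact hnotmem (by rw [← heqn]; exact (periodic_iterate hper (k * P ^ 2) n₀ hn₀N).mp hn₀mem)
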